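/- Suppose x is a bounded real sequence whose set of sub-limits S(x) = {a_1, a_2, …, a_m} is finite (with the a_j pairwise distinct). Then for every Banach limit L, ∑_{a_j > 0} a_j·w_l(a_j) + ∑_{a_j < 0} a_j·w^u(a_j) ≤ L(x) ≤ ∑_{a_j > 0} a_j·w^u(a_j) + ∑_{a_j < 0} a_j·w_l(a_j). -/

import Mathlib

open Filter

/-- A bounded real sequence. -/
def IsBddSeq (x : ℕ → ℝ) : Prop := ∃ C : ℝ, ∀ n, |x n| ≤ C

/-- The sup norm of a (bounded) real sequence. -/
noncomputable def supNorm (x : ℕ → ℝ) : ℝ := ⨆ n, |x n|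

/-- A Banach limit: a linear functional on the space of bounded real sequences
(extended arbitrarily to all sequences) that is positive, shift-invariant,
and sends the constant-one sequence to `1`. -/
def IsBanachLimit (L : (ℕ → ℝ) → ℝ) : Prop :=
  (∀ x y : ℕ → ℝ, IsBddSeq x → IsBddSeq y → L (x + y) = L x + L y) ∧
  (∀ (c : ℝ) (x : ℕ → ℝ), IsBddSeq x → L (c • x) = c * L x) ∧
  (∀ x : ℕ → ℝ, IsBddSeq x → (∀ n, 0 ≤ x n) → 0 ≤ L x) ∧
  (∀ x : ℕ → ℝ, IsBddSeq x → L (fun n => x (n + 1)) = L x) ∧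
  L (fun _ => 1) = 1

/-- A bounded sequence is almost convergent if all Banach limits agree on it. -/
def AlmostConvergent (x : ℕ → ℝ) : Prop :=
  ∃ c : ℝ, ∀ L : (ℕ → ℝ) → ℝ, IsBanachLimit L → L x = c

/-- `a` is a sub-limit of `x` if some subsequence of `x` converges to `a`. -/
def IsSubLimit (x : ℕ → ℝ) (a : ℝ) : Prop :=
  ∃ n : ℕ → ℕ, StrictMono n ∧ Tendsto (fun k => x (n k)) atTop (nhds a)

/-- The set of all sub-limits of `x`. -/
def subLimitSet (x : ℕ → ℝ) : Set ℝ := {a | IsSubLimit x a}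

/-- `A({k : i ≤ n_k ≤ i + len - 1})`: the number of indices of the subsequence
given by `n` falling in the window `[i, i + len - 1]`. -/
noncomputable def windowCount (n : ℕ → ℕ) (i len : ℕ) : ℕ :=
  {k : ℕ | i ≤ n k ∧ n k < i + len}.ncard

/-- Upper weight of a subsequence with index map `n`. -/
noncomputable def upperWeight (n : ℕ → ℕ) : ℝ :=
  limsup (fun len : ℕ => ⨆ i : ℕ, (windowCount n i len : ℝ) / len) atTop

/-- Lower weight of a subsequence with index map `n`. -/
noncomputable def lowerWeight (n : ℕ → ℕ) : ℝ :=
  liminf (fun len : ℕ => ⨅ i : ℕ, (windowCount n i len : ℝ) / len) atTop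

/-- `n` indexes an essential subsequence of `x` for the sub-limit `a`:
it converges to `a` and every subsequence of `x` converging to `a` has all
but finitely many of its indices among the `n k`. -/
def IsEssentialSubseq (x : ℕ → ℝ) (a : ℝ) (n : ℕ → ℕ) : Prop :=
  StrictMono n ∧ Tendsto (fun k => x (n k)) atTop (nhds a) ∧
  ∀ m : ℕ → ℕ, StrictMono m → Tendsto (fun t => x (m t)) atTop (nhds a) →
    {t : ℕ | ¬ ∃ k, n k = m t}.Finite

/-- The weight `w(a)` of a sub-limit `a` of `x` exists and equals `w`:
some essential subsequence of `a` has upper weight and lower weight both `w`. -/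
def HasSubLimitWeight (x : ℕ → ℝ) (a : ℝ) (w : ℝ) : Prop :=
  ∃ n : ℕ → ℕ, IsEssentialSubseq x a n ∧ upperWeight n = w ∧ lowerWeight n = w

/-- `A({k : x(k+i) ∈ S, k = 0, …, len-1})`. -/
noncomputable def seqCount (x : ℕ → ℝ) (S : Set ℝ) (i len : ℕ) : ℕ :=
  {k : ℕ | k < len ∧ x (k + i) ∈ S}.ncard

/-- The weight of `x` with respect to `S` exists and equals `w`:
`A({k : x(k+i) ∈ S, k = 0,…,n-1})/n → w` as `n → ∞`, uniformly in `i`. -/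
def HasSetWeight (x : ℕ → ℝ) (S : Set ℝ) (w : ℝ) : Prop :=
  ∀ ε : ℝ, 0 < ε → ∃ N : ℕ, ∀ n ≥ N, ∀ i : ℕ,
    |(seqCount x S i n : ℝ) / n - w| < ε

/-- `x` is properly distributed: every Borel subset of `[-‖x‖∞, ‖x‖∞]`
has a weight with respect to `x`. -/
def ProperlyDistributed (x : ℕ → ℝ) : Prop :=
  ∀ S : Set ℝ, MeasurableSet S → S ⊆ Set.Icc (-(supNorm x)) (supNorm x) →
    ∃ w : ℝ, HasSetWeight x S w

/-- `s` is simply distributed: it takes finitely many values, and each value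
has a weight with respect to `s`. -/
def SimplyDistributed (s : ℕ → ℝ) : Prop :=
  (Set.range s).Finite ∧ ∀ a ∈ Set.range s, ∃ w : ℝ, HasSetWeight s {a} w

section BanachAux

private lemma bdd_const (c : ℝ) : IsBddSeq (fun _ : ℕ => c) := ⟨|c|, fun _ => le_rfl⟩

private lemma bdd_shift {x : ℕ → ℝ} (hx : IsBddSeq x) (k : ℕ) :
    IsBddSeq (fun n => x (n + k)) := by
  obtain ⟨C, hC⟩ := hx; exact ⟨C, fun n => hC _⟩

private lemma bdd_add {x y : ℕ → ℝ} (hx : IsBddSeq x) (hy : IsBddSeq y) :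
    IsBddSeq (x + y) := by
  obtain ⟨C, hC⟩ := hx; obtain ⟨D, hD⟩ := hy
  exact ⟨C + D, fun n => (abs_add_le _ _).trans (add_le_add (hC n) (hD n))⟩

private lemma bdd_sumw {x : ℕ → ℝ} (hx : IsBddSeq x) (n : ℕ) :
    IsBddSeq (fun i => ∑ k ∈ Finset.range n, x (i + k)) := by
  obtain ⟨C, hC⟩ := hx
  refine ⟨n * C, fun i => ?_⟩
  calc |∑ k ∈ Finset.range n, x (i + k)| ≤ ∑ k ∈ Finset.range n, |x (i + k)| :=
        Finset.abs_sum_le_sum_abs _ _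
    _ ≤ ∑ _k ∈ Finset.range n, C := Finset.sum_le_sum fun k _ => hC _
    _ = n * C := by simp [mul_comm]

private lemma L_shift {L : (ℕ → ℝ) → ℝ} (hL : IsBanachLimit L) {x : ℕ → ℝ}
    (hx : IsBddSeq x) (k : ℕ) : L (fun n => x (n + k)) = L x := by
  induction k with
  | zero => simp
  | succ k ih =>
    have h1 : (fun n => x (n + (k + 1))) = fun n => (fun m => x (m + k)) (n + 1) := by
      funext n; congr 1; omega
    rw [h1, hL.2.2.2.1 _ (bdd_shift hx k), ih]

private lemma L_le {L : (ℕ → ℝ) → ℝ} (hL : IsBanachLimit L) {y : ℕ → ℝ}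
    (hy : IsBddSeq y) {u : ℝ} (h : ∀ n, y n ≤ u) : L y ≤ u := by
  obtain ⟨hadd, hsmul, hpos, hshift, hone⟩ := hL
  have hneg : IsBddSeq ((-1 : ℝ) • y) := by
    obtain ⟨C, hC⟩ := hy; exact ⟨C, fun n => by simpa using hC n⟩
  have hconstu : L (fun _ : ℕ => u) = u := by
    have e : (u • fun _ : ℕ => (1 : ℝ)) = fun _ : ℕ => u := by funext n; simp
    have := hsmul u (fun _ => 1) (bdd_const 1)
    rw [e] at this; rw [this, hone, mul_one]
  have h1 : L ((fun _ : ℕ => u) + (-1 : ℝ) • y) = u - L y := by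
    rw [hadd _ _ (bdd_const u) hneg, hsmul _ _ hy, hconstu]; ring
  have h2 : 0 ≤ L ((fun _ : ℕ => u) + (-1 : ℝ) • y) := by
    refine hpos _ (bdd_add (bdd_const u) hneg) fun n => ?_
    have := h n
    simp only [Pi.add_apply, Pi.smul_apply, smul_eq_mul]
    linarith
  linarith [h1 ▸ h2]

private lemma L_avg {L : (ℕ → ℝ) → ℝ} (hL : IsBanachLimit L) {x : ℕ → ℝ}
    (hx : IsBddSeq x) (n : ℕ) :
    L (fun i => ∑ k ∈ Finset.range n, x (i + k)) = n * L x := by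
  induction n with
  | zero =>
    have e : (fun i : ℕ => ∑ k ∈ Finset.range 0, x (i + k)) = (0 : ℝ) • x := by
      funext i; simp
    rw [e, hL.2.1 _ _ hx]; simp
  | succ n ih =>
    have e : (fun i : ℕ => ∑ k ∈ Finset.range (n + 1), x (i + k))
        = (fun i => ∑ k ∈ Finset.range n, x (i + k)) + fun i => x (i + n) := by
      funext i; simp [Finset.sum_range_succ]
    rw [e, hL.1 _ _ (bdd_sumw hx n) (bdd_shift hx n), ih, L_shift hL hx n]
    push_cast; ring

private lemma L_le_avg {L : (ℕ → ℝ) → ℝ} (hL : IsBanachLimit L) {x : ℕ → ℝ}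
    (hx : IsBddSeq x) {n : ℕ} (hn : 0 < n) {u : ℝ}
    (h : ∀ i, ∑ k ∈ Finset.range n, x (i + k) ≤ n * u) : L x ≤ u := by
  have h1 := L_avg hL hx n
  have h2 : L (fun i => ∑ k ∈ Finset.range n, x (i + k)) ≤ n * u :=
    L_le hL (bdd_sumw hx n) h
  have hn' : (0 : ℝ) < n := by exact_mod_cast hn
  rw [h1] at h2
  exact le_of_mul_le_mul_left h2 hn'

end BanachAux

section BWAux

open Set in
private lemma bw {x : ℕ → ℝ} (hx : IsBddSeq x) {T : Set ℕ} (hT : T.Infinite) :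
    ∃ b ∈ subLimitSet x, ∃ φ : ℕ → ℕ, StrictMono φ ∧ (∀ k, φ k ∈ T) ∧
      Tendsto (fun k => x (φ k)) atTop (nhds b) := by
  obtain ⟨C, hC⟩ := hx
  have hT' : (setOf (· ∈ T)).Infinite := hT
  have hmem : ∀ k, x (Nat.nth (· ∈ T) k) ∈ Set.Icc (-C) C := fun k => by
    have := hC (Nat.nth (· ∈ T) k); rw [abs_le] at this; exact ⟨this.1, this.2⟩
  obtain ⟨b, _, ψ, hψ, hb⟩ :=
    tendsto_subseq_of_bounded (Metric.isBounded_Icc (-C) C) hmem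
  have hmono : StrictMono (Nat.nth (· ∈ T)) := Nat.nth_strictMono hT'
  have hb' : Tendsto (fun k => x (Nat.nth (· ∈ T) (ψ k))) atTop (nhds b) := hb
  exact ⟨b, ⟨_, hmono.comp hψ, hb'⟩, _, hmono.comp hψ,
    fun k => Nat.nth_mem_of_infinite hT' _, hb'⟩

private lemma tendsto_of_unique {y : ℕ → ℝ} (hy : IsBddSeq y) (b : ℝ)
    (h : ∀ c ∈ subLimitSet y, c = b) : Tendsto y atTop (nhds b) := by
  by_contra hcon
  rw [Metric.tendsto_atTop] at hcon
  push_neg at hcon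
  obtain ⟨ε, hε, hfreq⟩ := hcon
  have hinf : {n | ε ≤ dist (y n) b}.Infinite := by
    apply Set.infinite_of_not_bddAbove
    rintro ⟨N, hN⟩
    obtain ⟨n, hn, hd⟩ := hfreq (N + 1)
    exact absurd (hN hd) (by omega)
  obtain ⟨c, hc, φ, hφ, hφT, hφlim⟩ := bw hy hinf
  have h1 : ε ≤ dist c b := by
    have hd : Tendsto (fun k => dist (y (φ k)) b) atTop (nhds (dist c b)) :=
      (hφlim.dist tendsto_const_nhds)
    exact ge_of_tendsto hd (Filter.Eventually.of_forall fun k => hφT k)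
  rw [h c hc] at h1
  simp at h1
  exact absurd (lt_of_lt_of_le hε h1) (lt_irrefl _)

end BWAux

section CountAux

private lemma set_Ico_ncard (i len : ℕ) : (Set.Ico i (i + len)).ncard = len := by
  rw [← Finset.coe_Ico, Set.ncard_coe_finset, Nat.card_Ico]; omega

private lemma windowCount_eq {f : ℕ → ℕ} (hf : Function.Injective f) (i len : ℕ) :
    windowCount f i len = (Set.range f ∩ Set.Ico i (i + len)).ncard := by
  have h1 : {k : ℕ | i ≤ f k ∧ f k < i + len} = f ⁻¹' (Set.Ico i (i + len)) := rfl
  rw [windowCount, h1, ← Set.ncard_image_of_injective _ hf,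
    Set.image_preimage_eq_range_inter]

private lemma windowCount_le {f : ℕ → ℕ} (hf : Function.Injective f) (i len : ℕ) :
    windowCount f i len ≤ len := by
  rw [windowCount_eq hf]
  calc (Set.range f ∩ Set.Ico i (i + len)).ncard
      ≤ (Set.Ico i (i + len)).ncard :=
        Set.ncard_le_ncard Set.inter_subset_right (Set.finite_Ico _ _)
    _ = len := set_Ico_ncard i len

private lemma ratio_nonneg {f : ℕ → ℕ} (i len : ℕ) :
    (0 : ℝ) ≤ (windowCount f i len : ℝ) / len := by positivity

private lemma ratio_le_one {f : ℕ → ℕ} (hf : Function.Injective f) (i len : ℕ) :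
    (windowCount f i len : ℝ) / len ≤ 1 := by
  rcases Nat.eq_zero_or_pos len with h | h
  · subst h; simp
  · rw [div_le_one (by exact_mod_cast h)]
    exact_mod_cast windowCount_le hf i len

private lemma iSup_ratio_le_one {f : ℕ → ℕ} (hf : Function.Injective f) (len : ℕ) :
    (⨆ i : ℕ, (windowCount f i len : ℝ) / len) ≤ 1 :=
  ciSup_le fun i => ratio_le_one hf i len

private lemma bddAbove_ratio {f : ℕ → ℕ} (hf : Function.Injective f) (len : ℕ) :
    BddAbove (Set.range fun i : ℕ => (windowCount f i len : ℝ) / len) :=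
  ⟨1, by rintro _ ⟨i, rfl⟩; exact ratio_le_one hf i len⟩

private lemma bddBelow_ratio (f : ℕ → ℕ) (len : ℕ) :
    BddBelow (Set.range fun i : ℕ => (windowCount f i len : ℝ) / len) :=
  ⟨0, by rintro _ ⟨i, rfl⟩; exact ratio_nonneg i len⟩

private lemma iInf_ratio_nonneg (f : ℕ → ℕ) (len : ℕ) :
    (0 : ℝ) ≤ ⨅ i : ℕ, (windowCount f i len : ℝ) / len :=
  le_ciInf fun i => ratio_nonneg i len

end CountAux

private lemma aux_upper (x : ℕ → ℝ) (hx : IsBddSeq x)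
    (m : ℕ) (a : Fin m → ℝ) (hinj : Function.Injective a)
    (hS : subLimitSet x = Set.range a)
    (e : Fin m → ℕ → ℕ) (he : ∀ j, IsEssentialSubseq x (a j) (e j))
    (L : (ℕ → ℝ) → ℝ) (hL : IsBanachLimit L) :
    L x ≤ ∑ j, (if 0 < a j then a j * upperWeight (e j) else a j * lowerWeight (e j)) := by
  classical
  obtain ⟨C, hC⟩ := hx
  have hxB : IsBddSeq x := ⟨C, hC⟩
  have hC0 : 0 ≤ C := le_trans (abs_nonneg _) (hC 0)
  have hej : ∀ j : Fin m, Function.Injective (e j) := fun j => (he j).1.injective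
  obtain ⟨δ, hδ0, hδ⟩ : ∃ δ > 0, ∀ j j' : Fin m, j ≠ j' → δ ≤ |a j - a j'| := by
    by_cases hm : ∀ j j' : Fin m, j = j'
    · exact ⟨1, one_pos, fun j j' h => absurd (hm j j') h⟩
    · push_neg at hm
      obtain ⟨j0, j0', hne⟩ := hm
      obtain ⟨p, hp, hpmin⟩ := Finset.exists_min_image
        (Finset.univ.filter fun p : Fin m × Fin m => p.1 ≠ p.2) (fun p => |a p.1 - a p.2|)
        ⟨(j0, j0'), Finset.mem_filter.2 ⟨Finset.mem_univ _, hne⟩⟩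
      refine ⟨|a p.1 - a p.2|,
        abs_pos.2 (sub_ne_zero.2 fun h => (Finset.mem_filter.1 hp).2 (hinj h)),
        fun j j' h => hpmin (j, j') (Finset.mem_filter.2 ⟨Finset.mem_univ _, h⟩)⟩
  refine le_of_forall_pos_le_add fun ε hε => ?_
  set ε1 : ℝ := ε / 3 with hε1
  have hε10 : 0 < ε1 := by positivity
  set ε' : ℝ := min (ε1 / (m + 1)) (δ / 3) with hε'def
  have hε'0 : 0 < ε' := lt_min (by positivity) (by positivity)
  have hε'δ : ε' ≤ δ / 3 := min_le_right _ _
  have hε'm : (m : ℝ) * ε' ≤ ε1 := by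
    have h1 : ε' ≤ ε1 / (m + 1) := min_le_left _ _
    have h2 : (0:ℝ) ≤ (m:ℝ) := Nat.cast_nonneg m
    calc (m : ℝ) * ε' ≤ (m : ℝ) * (ε1 / (m + 1)) := mul_le_mul_of_nonneg_left h1 h2
      _ ≤ ε1 := by
          rw [mul_div_assoc', div_le_iff₀ (by positivity)]
          nlinarith
  set S : ℝ := ∑ j, |a j| with hSdef
  have hS0 : 0 ≤ S := Finset.sum_nonneg fun j _ => abs_nonneg _
  set ε2 : ℝ := ε1 / (S + 1) with hε2def
  have hε20 : 0 < ε2 := by positivity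
  have hSε2 : S * ε2 ≤ ε1 := by
    rw [hε2def, mul_div_assoc', div_le_iff₀ (by positivity)]
    nlinarith
  -- the sets
  set G : Fin m → Set ℕ := fun j => {t | |x t - a j| < ε'} with hGdef
  have hGdisj : ∀ j j' : Fin m, j ≠ j' → ∀ t, t ∈ G j → t ∉ G j' := by
    intro j j' hne t htj htj'
    have h0 : |x t - a j| < ε' := htj
    have h0' : |x t - a j'| < ε' := htj'
    have h1 : |a j - a j'| ≤ |x t - a j'| + |x t - a j| := by
      have he1 : a j - a j' = (x t - a j') - (x t - a j) := by ring
      rw [he1]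
      exact abs_sub _ _
    have h2 := hδ j j' hne
    linarith
  set Bad : Set ℕ := {t | ∀ j, t ∉ G j} with hBaddef
  have hBadFin : Bad.Finite := by
    by_contra hinf
    obtain ⟨b, hb, φ, hφ, hφT, hφlim⟩ := bw hxB hinf
    rw [hS] at hb
    obtain ⟨j, rfl⟩ := hb
    have h1 : ∀ k, ε' ≤ |x (φ k) - a j| := by
      intro k
      by_contra hlt
      push_neg at hlt
      exact (hφT k) j hlt
    have h2 : Tendsto (fun k => |x (φ k) - a j|) atTop (nhds |a j - a j|) :=
      (hφlim.sub tendsto_const_nhds).abs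
    have h3 := ge_of_tendsto h2 (Filter.Eventually.of_forall h1)
    simp at h3
    linarith
  have h2a : ∀ j, (Set.range (e j) \ G j).Finite := by
    intro j
    have htd := (he j).2.1
    obtain ⟨N, hN⟩ := Metric.tendsto_atTop.1 htd ε' hε'0
    apply Set.Finite.subset ((Set.finite_Iio N).image (e j))
    rintro t ⟨⟨k, rfl⟩, hng⟩
    refine ⟨k, ?_, rfl⟩
    by_contra hk
    simp only [Set.mem_Iio, not_lt] at hk
    refine hng ?_
    have := hN k hk
    rw [Real.dist_eq] at this
    exact this
  have h2b : ∀ j, (G j \ Set.range (e j)).Finite := by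
    intro j
    by_contra hinf
    have hT' : (setOf (· ∈ (G j \ Set.range (e j)))).Infinite := hinf
    set g := Nat.nth (· ∈ (G j \ Set.range (e j))) with hg
    have hgmono : StrictMono g := Nat.nth_strictMono hT'
    have hgmem : ∀ k, g k ∈ G j \ Set.range (e j) := fun k => Nat.nth_mem_of_infinite hT' k
    have hybdd : IsBddSeq (fun k => x (g k)) := ⟨C, fun k => hC _⟩
    have hylim : Tendsto (fun k => x (g k)) atTop (nhds (a j)) := by
      apply tendsto_of_unique hybdd
      intro c hc
      obtain ⟨ψ, hψ, hψlim⟩ := hc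
      have hcx : c ∈ subLimitSet x := ⟨g ∘ ψ, hgmono.comp hψ, hψlim⟩
      rw [hS] at hcx
      obtain ⟨j', rfl⟩ := hcx
      have hle : |a j' - a j| ≤ ε' := by
        have h2 : Tendsto (fun k => |x (g (ψ k)) - a j|) atTop (nhds |a j' - a j|) :=
          (hψlim.sub tendsto_const_nhds).abs
        exact le_of_tendsto h2 (Filter.Eventually.of_forall fun k => le_of_lt (hgmem (ψ k)).1)
      rcases eq_or_ne j' j with rfl | hne
      · rfl
      · have := hδ j' j hne
        have : False := by linarith
        exact this.elim
    have hfin := (he j).2.2 g hgmono hylim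
    have huniv : {t : ℕ | ¬ ∃ k, e j k = g t} = Set.univ :=
      Set.eq_univ_of_forall fun t hex => (hgmem t).2 ⟨hex.choose, hex.choose_spec⟩
    rw [huniv] at hfin
    exact Set.infinite_univ hfin
  set cp : Fin m → ℕ := fun j => (G j \ Set.range (e j)).ncard with hcp
  set cm : Fin m → ℕ := fun j => (Set.range (e j) \ G j).ncard with hcm
  set B : ℕ := Bad.ncard with hB
  set D : ℝ := C * B + ∑ j, |a j| * ((cp j : ℝ) + (cm j : ℝ)) with hD
  -- key counting inequality
  have key : ∀ i n : ℕ, ∑ k ∈ Finset.range n, x (i + k) ≤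
      D + (∑ j, a j * (windowCount (e j) i n : ℝ)) + (n : ℝ) * ((m : ℝ) * ε') := by
    intro i n
    have hIco : ∑ k ∈ Finset.range n, x (i + k) = ∑ t ∈ Finset.Ico i (i + n), x t := by
      rw [Finset.sum_Ico_eq_sum_range]
      simp
    have hpt : ∀ t : ℕ, x t ≤ (if t ∈ Bad then C else 0)
        + ∑ j, (if t ∈ G j then a j + ε' else 0) := by
      intro t
      by_cases hBc : ∃ j, t ∈ G j
      · obtain ⟨j0, hj0⟩ := hBc
        have hnb : t ∉ Bad := fun hb => hb j0 hj0
        rw [if_neg hnb]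
        have hsum : ∑ j, (if t ∈ G j then a j + ε' else 0) = a j0 + ε' := by
          rw [Finset.sum_eq_single_of_mem j0 (Finset.mem_univ _)]
          · rw [if_pos hj0]
          · intro b _ hb
            exact if_neg (hGdisj j0 b (fun h => hb h.symm) t hj0)
        rw [hsum, zero_add]
        have habs : |x t - a j0| < ε' := hj0
        have := abs_lt.1 habs
        linarith [this.2]
      · push_neg at hBc
        have hbm : t ∈ Bad := fun j => hBc j
        rw [if_pos hbm]
        have hsum : ∑ j, (if t ∈ G j then a j + ε' else 0) = 0 :=
          Finset.sum_eq_zero fun j _ => if_neg (hBc j)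
        rw [hsum, add_zero]
        exact le_trans (le_abs_self _) (hC t)
    have hsum1 : ∑ t ∈ Finset.Ico i (i + n), x t ≤
        ∑ t ∈ Finset.Ico i (i + n), ((if t ∈ Bad then C else 0)
          + ∑ j, (if t ∈ G j then a j + ε' else 0)) :=
      Finset.sum_le_sum fun t _ => hpt t
    rw [Finset.sum_add_distrib] at hsum1
    have hbad : ∑ t ∈ Finset.Ico i (i + n), (if t ∈ Bad then C else 0) ≤ C * B := by
      rw [← Finset.sum_filter, Finset.sum_const, nsmul_eq_mul]
      have hcard : ((Finset.Ico i (i + n)).filter (· ∈ Bad)).card ≤ B := by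
        rw [hB, ← Set.ncard_coe_finset]
        apply Set.ncard_le_ncard _ hBadFin
        intro t ht
        simp only [Finset.coe_filter, Set.mem_setOf_eq] at ht
        exact ht.2
      calc (((Finset.Ico i (i + n)).filter (· ∈ Bad)).card : ℝ) * C ≤ (B : ℝ) * C :=
            mul_le_mul_of_nonneg_right (by exact_mod_cast hcard) hC0
        _ = C * B := mul_comm _ _
    have hswap : ∑ t ∈ Finset.Ico i (i + n), ∑ j, (if t ∈ G j then a j + ε' else 0)
        = ∑ j, ∑ t ∈ Finset.Ico i (i + n), (if t ∈ G j then a j + ε' else 0) :=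
      Finset.sum_comm
    have hgj : ∀ j, ∑ t ∈ Finset.Ico i (i + n), (if t ∈ G j then a j + ε' else 0)
        ≤ a j * (windowCount (e j) i n : ℝ) + |a j| * ((cp j : ℝ) + (cm j : ℝ)) + ε' * n := by
      intro j
      rw [← Finset.sum_filter, Finset.sum_const, nsmul_eq_mul]
      set N : ℕ := ((Finset.Ico i (i + n)).filter (· ∈ G j)).card with hNdef
      set W : ℕ := windowCount (e j) i n with hW
      have hNset : (N : ℕ) = ((G j) ∩ Set.Ico i (i + n)).ncard := by
        rw [hNdef, ← Set.ncard_coe_finset]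
        congr 1
        ext t
        simp only [Finset.coe_filter, Set.mem_setOf_eq, Finset.mem_Ico, Set.mem_inter_iff,
          Set.mem_Ico]
        tauto
      have hWset : (W : ℕ) = (Set.range (e j) ∩ Set.Ico i (i + n)).ncard := by
        rw [hW, windowCount_eq (hej j)]
      have hIcoFin : (Set.Ico i (i + n)).Finite := Set.finite_Ico _ _
      have hNW : N ≤ W + cp j := by
        rw [hNset, hWset, hcp]
        calc (G j ∩ Set.Ico i (i + n)).ncard
            ≤ ((Set.range (e j) ∩ Set.Ico i (i + n)) ∪ (G j \ Set.range (e j))).ncard := by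
              apply Set.ncard_le_ncard _ ((hIcoFin.subset Set.inter_subset_right).union (h2b j))
              intro t ht
              by_cases hr : t ∈ Set.range (e j)
              · exact Or.inl ⟨hr, ht.2⟩
              · exact Or.inr ⟨ht.1, hr⟩
          _ ≤ _ := Set.ncard_union_le _ _
      have hWN : W ≤ N + cm j := by
        rw [hNset, hWset, hcm]
        calc (Set.range (e j) ∩ Set.Ico i (i + n)).ncard
            ≤ ((G j ∩ Set.Ico i (i + n)) ∪ (Set.range (e j) \ G j)).ncard := by
              apply Set.ncard_le_ncard _ ((hIcoFin.subset Set.inter_subset_right).union (h2a j))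
              intro t ht
              by_cases hgm : t ∈ G j
              · exact Or.inl ⟨hgm, ht.2⟩
              · exact Or.inr ⟨ht.1, hgm⟩
          _ ≤ _ := Set.ncard_union_le _ _
      have habs : |(N : ℝ) - (W : ℝ)| ≤ (cp j : ℝ) + (cm j : ℝ) := by
        have c1 : (N : ℝ) ≤ (W : ℝ) + (cp j : ℝ) := by exact_mod_cast hNW
        have c2 : (W : ℝ) ≤ (N : ℝ) + (cm j : ℝ) := by exact_mod_cast hWN
        have c3 : (0:ℝ) ≤ (cp j : ℝ) := Nat.cast_nonneg _
        have c4 : (0:ℝ) ≤ (cm j : ℝ) := Nat.cast_nonneg _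
        rw [abs_le]
        constructor <;> linarith
      have hNn : N ≤ n := by
        calc N ≤ (Finset.Ico i (i + n)).card := Finset.card_filter_le _ _
          _ = n := by rw [Nat.card_Ico]; omega
      have h2 : a j * (N : ℝ) - a j * (W : ℝ) ≤ |a j| * ((cp j : ℝ) + (cm j : ℝ)) := by
        calc a j * (N : ℝ) - a j * (W : ℝ) = a j * ((N : ℝ) - (W : ℝ)) := by ring
          _ ≤ |a j * ((N : ℝ) - (W : ℝ))| := le_abs_self _
          _ = |a j| * |(N : ℝ) - (W : ℝ)| := abs_mul _ _
          _ ≤ |a j| * ((cp j : ℝ) + (cm j : ℝ)) :=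
              mul_le_mul_of_nonneg_left habs (abs_nonneg _)
      have h3 : ε' * (N : ℝ) ≤ ε' * (n : ℝ) :=
        mul_le_mul_of_nonneg_left (by exact_mod_cast hNn) hε'0.le
      calc (N : ℝ) * (a j + ε') = a j * (N : ℝ) + ε' * (N : ℝ) := by ring
        _ ≤ a j * (W : ℝ) + |a j| * ((cp j : ℝ) + (cm j : ℝ)) + ε' * n := by linarith
    have hsum2 : ∑ j, ∑ t ∈ Finset.Ico i (i + n), (if t ∈ G j then a j + ε' else 0)
        ≤ ∑ j, (a j * (windowCount (e j) i n : ℝ)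
            + |a j| * ((cp j : ℝ) + (cm j : ℝ)) + ε' * n) :=
      Finset.sum_le_sum fun j _ => hgj j
    have hsplit : ∑ j, (a j * (windowCount (e j) i n : ℝ)
            + |a j| * ((cp j : ℝ) + (cm j : ℝ)) + ε' * n)
        = (∑ j, a j * (windowCount (e j) i n : ℝ))
          + (∑ j, |a j| * ((cp j : ℝ) + (cm j : ℝ))) + (m : ℝ) * (ε' * n) := by
      rw [Finset.sum_add_distrib, Finset.sum_add_distrib, Finset.sum_const, Finset.card_univ,
        Fintype.card_fin, nsmul_eq_mul]
    rw [hIco]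
    rw [hswap] at hsum1
    rw [hsplit] at hsum2
    rw [hD]
    linarith [hsum1, hsum2, hbad]
  -- eventual bounds on sup/inf ratios
  have hUb : ∀ j : Fin m, ∀ᶠ n : ℕ in atTop,
      (⨆ i : ℕ, (windowCount (e j) i n : ℝ) / n) < upperWeight (e j) + ε2 := by
    intro j
    have hbd : IsBoundedUnder (· ≤ ·) atTop
        (fun len : ℕ => ⨆ i : ℕ, (windowCount (e j) i len : ℝ) / len) :=
      isBoundedUnder_of ⟨1, fun len => iSup_ratio_le_one (hej j) len⟩
    have hlt : limsup (fun len : ℕ => ⨆ i : ℕ, (windowCount (e j) i len : ℝ) / len) atTop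
        < upperWeight (e j) + ε2 := by
      have : limsup (fun len : ℕ => ⨆ i : ℕ, (windowCount (e j) i len : ℝ) / len) atTop
          = upperWeight (e j) := rfl
      rw [this]
      linarith
    exact eventually_lt_of_limsup_lt hlt hbd
  have hLb : ∀ j : Fin m, ∀ᶠ n : ℕ in atTop,
      lowerWeight (e j) - ε2 < ⨅ i : ℕ, (windowCount (e j) i n : ℝ) / n := by
    intro j
    have hbd : IsBoundedUnder (· ≥ ·) atTop
        (fun len : ℕ => ⨅ i : ℕ, (windowCount (e j) i len : ℝ) / len) :=
      isBoundedUnder_of ⟨0, fun len => iInf_ratio_nonneg (e j) len⟩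
    have hlt : lowerWeight (e j) - ε2
        < liminf (fun len : ℕ => ⨅ i : ℕ, (windowCount (e j) i len : ℝ) / len) atTop := by
      have : liminf (fun len : ℕ => ⨅ i : ℕ, (windowCount (e j) i len : ℝ) / len) atTop
          = lowerWeight (e j) := rfl
      rw [this]
      linarith
    exact eventually_lt_of_lt_liminf hlt hbd
  have hterm : ∀ᶠ n : ℕ in atTop, ∀ j : Fin m,
      (if 0 < a j then a j * ⨆ i : ℕ, (windowCount (e j) i n : ℝ) / n
        else a j * ⨅ i : ℕ, (windowCount (e j) i n : ℝ) / n)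
      ≤ (if 0 < a j then a j * upperWeight (e j) else a j * lowerWeight (e j))
          + |a j| * ε2 := by
    rw [eventually_all]
    intro j
    by_cases hsign : 0 < a j
    · filter_upwards [hUb j] with n hn
      rw [if_pos hsign, if_pos hsign, abs_of_pos hsign]
      have := mul_le_mul_of_nonneg_left hn.le hsign.le
      rw [mul_add] at this
      linarith
    · filter_upwards [hLb j] with n hn
      rw [if_neg hsign, if_neg hsign]
      push_neg at hsign
      have h1 : a j * (⨅ i : ℕ, (windowCount (e j) i n : ℝ) / n)
          ≤ a j * (lowerWeight (e j) - ε2) := mul_le_mul_of_nonpos_left hn.le hsign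
      rw [mul_sub] at h1
      have h2 : -(a j * ε2) ≤ |a j| * ε2 :=
        mul_le_mul_of_nonneg_right (neg_le_abs _) hε20.le |>.trans_eq' (by ring)
      linarith
  have hDn : ∀ᶠ n : ℕ in atTop, D / (n : ℝ) ≤ ε1 := by
    have h0 : Tendsto (fun n : ℕ => D / (n : ℝ)) atTop (nhds 0) :=
      tendsto_const_div_atTop_nhds_zero_nat D
    exact h0.eventually (eventually_le_nhds hε10)
  obtain ⟨n, ⟨htermn, hDnn⟩, hn0⟩ := ((hterm.and hDn).and (eventually_gt_atTop 0)).exists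
  have hn0' : (0:ℝ) < (n : ℝ) := by exact_mod_cast hn0
  have hfinal : L x ≤ D / (n : ℝ)
      + (∑ j, ((if 0 < a j then a j * upperWeight (e j) else a j * lowerWeight (e j))
          + |a j| * ε2)) + (m : ℝ) * ε' := by
    apply L_le_avg hL hxB hn0
    intro i
    refine le_trans (key i n) ?_
    have hterms : ∑ j, a j * (windowCount (e j) i n : ℝ) ≤
        (n : ℝ) * ∑ j, ((if 0 < a j then a j * upperWeight (e j)
          else a j * lowerWeight (e j)) + |a j| * ε2) := by
      rw [Finset.mul_sum]
      apply Finset.sum_le_sum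
      intro j _
      have hwc : a j * (windowCount (e j) i n : ℝ)
          = (n : ℝ) * (a j * ((windowCount (e j) i n : ℝ) / (n : ℝ))) := by
        field_simp
      rw [hwc]
      apply mul_le_mul_of_nonneg_left _ hn0'.le
      refine le_trans ?_ (htermn j)
      by_cases hsign : 0 < a j
      · rw [if_pos hsign]
        exact mul_le_mul_of_nonneg_left (le_ciSup (bddAbove_ratio (hej j) n) i) hsign.le
      · rw [if_neg hsign]
        push_neg at hsign
        exact mul_le_mul_of_nonpos_left (ciInf_le (bddBelow_ratio (e j) n) i) hsign
    have heq : (n : ℝ) * (D / (n : ℝ)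
        + (∑ j, ((if 0 < a j then a j * upperWeight (e j) else a j * lowerWeight (e j))
            + |a j| * ε2)) + (m : ℝ) * ε')
        = D + (n : ℝ) * (∑ j, ((if 0 < a j then a j * upperWeight (e j)
            else a j * lowerWeight (e j)) + |a j| * ε2)) + (n : ℝ) * ((m : ℝ) * ε') := by
      rw [mul_add, mul_add, mul_div_assoc', mul_div_right_comm, div_self hn0'.ne', one_mul]
    rw [heq]
    linarith
  have hsplit2 : ∑ j, ((if 0 < a j then a j * upperWeight (e j)
      else a j * lowerWeight (e j)) + |a j| * ε2)
      = (∑ j, (if 0 < a j then a j * upperWeight (e j) else a j * lowerWeight (e j)))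
        + S * ε2 := by
    rw [Finset.sum_add_distrib, ← Finset.sum_mul]
  rw [hsplit2] at hfinal
  have : ε1 + ε1 + ε1 = ε := by rw [hε1]; ring
  linarith

theorem banachLimit_bounds_of_finite_subLimitSet' (x : ℕ → ℝ) (hx : IsBddSeq x)
    (m : ℕ) (a : Fin m → ℝ) (hinj : Function.Injective a)
    (hS : subLimitSet x = Set.range a)
    (e : Fin m → ℕ → ℕ) (he : ∀ j, IsEssentialSubseq x (a j) (e j))
    (L : (ℕ → ℝ) → ℝ) (hL : IsBanachLimit L) :
    (∑ j, (if 0 < a j then a j * lowerWeight (e j) else a j * upperWeight (e j)))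
        ≤ L x ∧
    L x ≤ ∑ j, (if 0 < a j then a j * upperWeight (e j) else a j * lowerWeight (e j)) := by
  refine ⟨?_, aux_upper x hx m a hinj hS e he L hL⟩
  have hxneg : IsBddSeq (fun n => -x n) := by
    obtain ⟨C, hC⟩ := hx; exact ⟨C, fun n => by simpa using hC n⟩
  have hinj' : Function.Injective (fun j => -a j) := fun j j' h => hinj (neg_injective h)
  have hS' : subLimitSet (fun n => -x n) = Set.range (fun j => -a j) := by
    ext b
    constructor
    · rintro ⟨ψ, hψ, hψlim⟩
      have hx' : Tendsto (fun k => x (ψ k)) atTop (nhds (-b)) := by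
        have := hψlim.neg; simpa using this
      have hb : -b ∈ subLimitSet x := ⟨ψ, hψ, hx'⟩
      rw [hS] at hb
      obtain ⟨j, hj⟩ := hb
      exact ⟨j, by simp only []; rw [hj, neg_neg]⟩
    · rintro ⟨j, rfl⟩
      have haj : a j ∈ subLimitSet x := by rw [hS]; exact Set.mem_range_self j
      obtain ⟨ψ, hψ, hψlim⟩ := haj
      exact ⟨ψ, hψ, by simpa using hψlim.neg⟩
  have he' : ∀ j, IsEssentialSubseq (fun n => -x n) ((fun j => -a j) j) (e j) := by
    intro j
    refine ⟨(he j).1, by simpa using (he j).2.1.neg, ?_⟩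
    intro mm hmm hlim
    apply (he j).2.2 mm hmm
    have := hlim.neg; simpa using this
  have hup := aux_upper (fun n => -x n) hxneg m (fun j => -a j) hinj' hS' e he' L hL
  have hLneg : L (fun n => -x n) = -L x := by
    have e1 : (fun n => -x n) = ((-1 : ℝ) • x) := by funext n; simp
    rw [e1, hL.2.1 _ _ hx]; ring
  rw [hLneg] at hup
  have hsum : ∑ j, (if 0 < (fun j => -a j) j then (fun j => -a j) j * upperWeight (e j)
      else (fun j => -a j) j * lowerWeight (e j))
      = -∑ j, (if 0 < a j then a j * lowerWeight (e j) else a j * upperWeight (e j)) := by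
    rw [← Finset.sum_neg_distrib]
    apply Finset.sum_congr rfl
    intro j _
    simp only
    rcases lt_trichotomy (a j) 0 with h | h | h
    · rw [if_pos (by linarith : (0:ℝ) < -a j), if_neg (not_lt.2 h.le)]; ring
    · rw [h]; simp
    · rw [if_neg (by linarith : ¬ (0:ℝ) < -a j), if_pos h]; ring
  rw [hsum] at hup
  linarith

/-- If the sub-limit set of a bounded sequence `x` is finite,
`{a 0, …, a (m-1)}`, then every Banach limit of `x` is bounded below by
`∑_{a_j > 0} a_j w_l(a_j) + ∑_{a_j < 0} a_j w^u(a_j)` and above by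
`∑_{a_j > 0} a_j w^u(a_j) + ∑_{a_j < 0} a_j w_l(a_j)`. -/
theorem banachLimit_bounds_of_finite_subLimitSet (x : ℕ → ℝ) (hx : IsBddSeq x)
    (m : ℕ) (a : Fin m → ℝ) (hinj : Function.Injective a)
    (hS : subLimitSet x = Set.range a)
    (e : Fin m → ℕ → ℕ) (he : ∀ j, IsEssentialSubseq x (a j) (e j))
    (L : (ℕ → ℝ) → ℝ) (hL : IsBanachLimit L) :
    (∑ j, (if 0 < a j then a j * lowerWeight (e j) else a j * upperWeight (e j)))
        ≤ L x ∧
    L x ≤ ∑ j, (if 0 < a j then a j * upperWeight (e j) else a j * lowerWeight (e j)) := by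
  exact banachLimit_bounds_of_finite_subLimitSet' x hx m a hinj hS e he L hL
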